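/- arXiv:2106.08142 — 4 statements merged into one kernel-verified Lean document; each statement's English description precedes it below -/
import Mathlib

section
/- In a symmetric monoidal category where every object is equipped with a commutative comonoid structure (comultiplication and counit) such that every morphism is a comonoid homomorphism and the comonoids are coherent with the monoidal structure, the monoidal product is a categorical product, with projections given by tensoring with the counit, and the monoidal unit is a terminal object. -/
open CategoryTheory MonoidalCategory

universe v u

/-- A symmetric monoidal category in which every object carries a cocommutative
comonoid structure (copy/discard) such that every morphism is a comonoid
homomorphism and the comonoids are coherent with the monoidal structure
(Fox's characterisation of cartesian categories). -/
class FoxCartesian (B : Type u) [Category.{v} B] [MonoidalCategory B]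
    [SymmetricCategory B] where
  copy : ∀ X : B, X ⟶ X ⊗ X
  discard : ∀ X : B, X ⟶ 𝟙_ B
  -- cocommutative comonoid axioms
  copy_assoc : ∀ X : B,
    copy X ≫ (copy X ▷ X) ≫ (α_ X X X).hom = copy X ≫ (X ◁ copy X)
  copy_comm : ∀ X : B, copy X ≫ (β_ X X).hom = copy X
  copy_counit : ∀ X : B, copy X ≫ (discard X ▷ X) ≫ (λ_ X).hom = 𝟙 X
  -- every morphism is a comonoid homomorphism
  nat_copy : ∀ {X Y : B} (f : X ⟶ Y), f ≫ copy Y = copy X ≫ (f ⊗ₘ f)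
  nat_discard : ∀ {X Y : B} (f : X ⟶ Y), f ≫ discard Y = discard X
  -- coherence of the comonoids with the monoidal structure
  discard_unit : discard (𝟙_ B) = 𝟙 (𝟙_ B)
  copy_unit : copy (𝟙_ B) = (λ_ (𝟙_ B)).inv
  discard_tensor : ∀ X Y : B,
    discard (X ⊗ Y) = (discard X ⊗ₘ discard Y) ≫ (λ_ (𝟙_ B)).hom
  copy_tensor : ∀ X Y : B,
    copy (X ⊗ Y) = (copy X ⊗ₘ copy Y) ≫ tensorμ X X Y Y

namespace FoxCartesian

variable {B : Type u} [Category.{v} B] [MonoidalCategory B] [SymmetricCategory B]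
  [FoxCartesian B]

/-- The first projection, obtained by discarding the second factor. -/
def proj₁ (X Y : B) : X ⊗ Y ⟶ X := (X ◁ discard Y) ≫ (ρ_ X).hom

/-- The second projection, obtained by discarding the first factor. -/
def proj₂ (X Y : B) : X ⊗ Y ⟶ Y := (discard X ▷ Y) ≫ (λ_ Y).hom

end FoxCartesian

open FoxCartesian

private lemma tensorμ_unit_aux {B : Type u} [Category.{v} B] [MonoidalCategory B]
    [SymmetricCategory B] (X Y : B) :
    ((ρ_ X).inv ⊗ₘ (λ_ Y).inv) ≫ tensorμ X (𝟙_ B) (𝟙_ B) Y ≫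
      ((ρ_ X).hom ⊗ₘ (λ_ Y).hom) = 𝟙 (X ⊗ Y) := by
  simp only [tensorμ, braiding_tensorUnit_left]
  coherence

namespace FoxCartesian

variable {B : Type u} [Category.{v} B] [MonoidalCategory B] [SymmetricCategory B]
  [FoxCartesian B]

lemma copy_counit_left (X : B) : copy X ≫ (X ◁ discard X) ≫ (ρ_ X).hom = 𝟙 X := by
  have h : (discard X ▷ X) ≫ (β_ (𝟙_ B) X).hom = (β_ X X).hom ≫ (X ◁ discard X) :=
    BraidedCategory.braiding_naturality_left (discard X) X
  calc copy X ≫ (X ◁ discard X) ≫ (ρ_ X).hom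
      = (copy X ≫ (β_ X X).hom) ≫ (X ◁ discard X) ≫ (ρ_ X).hom := by
        rw [copy_comm]
    _ = copy X ≫ (discard X ▷ X) ≫ (β_ (𝟙_ B) X).hom ≫ (ρ_ X).hom := by
        rw [Category.assoc, ← Category.assoc ((β_ X X).hom), ← h, Category.assoc]
    _ = copy X ≫ (discard X ▷ X) ≫ (λ_ X).hom := by simp
    _ = 𝟙 X := copy_counit X

lemma copy_counit_ρ (X : B) : copy X ≫ (X ◁ discard X) = (ρ_ X).inv := by
  rw [← Category.comp_id (copy X ≫ _), ← (ρ_ X).hom_inv_id, ← Category.assoc,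
    Category.assoc (copy X), copy_counit_left, Category.id_comp]

lemma copy_counit_lam (X : B) : copy X ≫ (discard X ▷ X) = (λ_ X).inv := by
  rw [← Category.comp_id (copy X ≫ _), ← (λ_ X).hom_inv_id, ← Category.assoc,
    Category.assoc (copy X), copy_counit, Category.id_comp]

lemma pair_proj₁ {X Y Z : B} (f : Z ⟶ X) (g : Z ⟶ Y) :
    (copy Z ≫ (f ⊗ₘ g)) ≫ proj₁ X Y = f := by
  have h : (f ⊗ₘ g) ≫ (X ◁ discard Y) = (Z ◁ discard Z) ≫ (f ▷ 𝟙_ B) := by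
    rw [MonoidalCategory.tensorHom_def, Category.assoc, ← MonoidalCategory.whiskerLeft_comp, nat_discard g,
      ← whisker_exchange]
  rw [proj₁, Category.assoc, ← Category.assoc (f ⊗ₘ g), h]
  simp [reassoc_of% (copy_counit_ρ Z)]

lemma pair_proj₂ {X Y Z : B} (f : Z ⟶ X) (g : Z ⟶ Y) :
    (copy Z ≫ (f ⊗ₘ g)) ≫ proj₂ X Y = g := by
  have h : (f ⊗ₘ g) ≫ (discard X ▷ Y) = (discard Z ▷ Z) ≫ (𝟙_ B ◁ g) := by
    rw [tensorHom_def', Category.assoc, ← MonoidalCategory.comp_whiskerRight, nat_discard f,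
      whisker_exchange]
  rw [proj₂, Category.assoc, ← Category.assoc (f ⊗ₘ g), h]
  simp [reassoc_of% (copy_counit_lam Z)]

lemma copy_proj (X Y : B) :
    copy (X ⊗ Y) ≫ (proj₁ X Y ⊗ₘ proj₂ X Y) = 𝟙 (X ⊗ Y) := by
  rw [copy_tensor, proj₁, proj₂, ← tensorHom_comp_tensorHom]
  have h := tensorμ_natural (𝟙 X) (discard X) (discard Y) (𝟙 Y)
  simp only [id_tensorHom, tensorHom_id] at h
  calc ((copy X ⊗ₘ copy Y) ≫ tensorμ X X Y Y) ≫
        ((X ◁ discard Y) ⊗ₘ (discard X ▷ Y)) ≫ ((ρ_ X).hom ⊗ₘ (λ_ Y).hom)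
      = (copy X ⊗ₘ copy Y) ≫ (tensorμ X X Y Y ≫ ((X ◁ discard Y) ⊗ₘ (discard X ▷ Y))) ≫
          ((ρ_ X).hom ⊗ₘ (λ_ Y).hom) := by simp
    _ = (copy X ⊗ₘ copy Y) ≫ (((X ◁ discard X) ⊗ₘ (discard Y ▷ Y)) ≫
          tensorμ X (𝟙_ B) (𝟙_ B) Y) ≫ ((ρ_ X).hom ⊗ₘ (λ_ Y).hom) := by rw [← h]
    _ = ((copy X ≫ (X ◁ discard X)) ⊗ₘ (copy Y ≫ (discard Y ▷ Y))) ≫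
          tensorμ X (𝟙_ B) (𝟙_ B) Y ≫ ((ρ_ X).hom ⊗ₘ (λ_ Y).hom) := by
        simp only [Category.assoc]
        rw [tensorHom_comp_tensorHom_assoc]
    _ = ((ρ_ X).inv ⊗ₘ (λ_ Y).inv) ≫ tensorμ X (𝟙_ B) (𝟙_ B) Y ≫
          ((ρ_ X).hom ⊗ₘ (λ_ Y).hom) := by rw [copy_counit_ρ, copy_counit_lam]
    _ = 𝟙 (X ⊗ Y) := tensorμ_unit_aux X Y

end FoxCartesian

theorem fox_monoidal_is_cartesian' {B : Type u} [Category.{v} B]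
    [MonoidalCategory B] [SymmetricCategory B] [FoxCartesian B] :
    (∀ (X : B) (f g : X ⟶ 𝟙_ B), f = g) ∧
    (∀ (X Y Z : B) (f : Z ⟶ X) (g : Z ⟶ Y),
      ∃! h : Z ⟶ X ⊗ Y, h ≫ proj₁ X Y = f ∧ h ≫ proj₂ X Y = g) := by
  constructor
  · intro X f g
    have hf : f = discard X := by rw [← nat_discard f, discard_unit, Category.comp_id]
    have hg : g = discard X := by rw [← nat_discard g, discard_unit, Category.comp_id]
    rw [hf, hg]
  · intro X Y Z f g
    refine ⟨copy Z ≫ (f ⊗ₘ g), ⟨pair_proj₁ f g, pair_proj₂ f g⟩, ?_⟩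
    rintro h ⟨h1, h2⟩
    calc h = h ≫ copy (X ⊗ Y) ≫ (proj₁ X Y ⊗ₘ proj₂ X Y) := by
            rw [copy_proj, Category.comp_id]
      _ = copy Z ≫ (h ⊗ₘ h) ≫ (proj₁ X Y ⊗ₘ proj₂ X Y) := by
            rw [← Category.assoc, nat_copy h, Category.assoc]
      _ = copy Z ≫ ((h ≫ proj₁ X Y) ⊗ₘ (h ≫ proj₂ X Y)) := by rw [tensorHom_comp_tensorHom]
      _ = copy Z ≫ (f ⊗ₘ g) := by rw [h1, h2]

/-- Fox's theorem, one direction: in a symmetric monoidal category whose objects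
carry natural, coherent cocommutative comonoids, the monoidal product is a
categorical product (with projections given by discarding one factor) and the
monoidal unit is a terminal object. -/
theorem fox_monoidal_is_cartesian {B : Type u} [Category.{v} B]
    [MonoidalCategory B] [SymmetricCategory B] [FoxCartesian B] :
    -- the monoidal unit is terminal
    (∀ (X : B) (f g : X ⟶ 𝟙_ B), f = g) ∧
    -- the monoidal product is a categorical product
    (∀ (X Y Z : B) (f : Z ⟶ X) (g : Z ⟶ Y),
      ∃! h : Z ⟶ X ⊗ Y, h ≫ proj₁ X Y = f ∧ h ≫ proj₂ X Y = g) := by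
  exact fox_monoidal_is_cartesian'
end

section
/- In a cartesian bicategory B, every hom-poset Hom_B(X,Y) is an inf-semilattice: the top element is !_X ; ¡_Y (discard followed by the right adjoint of discard), and the binary meet of R, S : X → Y is Δ_X ; (R ⊗ S) ; ∇_Y (copy, then R tensor S, then cocopy). -/
open CategoryTheory MonoidalCategory

universe v u

/-- A cartesian bicategory: a poset-enriched symmetric monoidal category in which
every object carries a cocommutative comonoid (copy/discard) whose structure maps
have right adjoints (cocopy/codiscard), the Frobenius law holds, every morphism
is a lax comonoid homomorphism, and the comonoids are coherent with the monoidal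
structure. -/
class CartesianBicat (B : Type u) [Category.{v} B] [MonoidalCategory B]
    [SymmetricCategory B] [∀ X Y : B, PartialOrder (X ⟶ Y)] where
  comp_le_comp : ∀ {X Y Z : B} {f f' : X ⟶ Y} {g g' : Y ⟶ Z},
    f ≤ f' → g ≤ g' → f ≫ g ≤ f' ≫ g'
  tensorHom_le_tensorHom : ∀ {X Y X' Y' : B} {f f' : X ⟶ Y} {g g' : X' ⟶ Y'},
    f ≤ f' → g ≤ g' → (f ⊗ₘ g) ≤ (f' ⊗ₘ g')
  copy : ∀ X : B, X ⟶ X ⊗ X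
  discard : ∀ X : B, X ⟶ 𝟙_ B
  cocopy : ∀ X : B, X ⊗ X ⟶ X
  codiscard : ∀ X : B, 𝟙_ B ⟶ X
  -- cocommutative comonoid axioms
  copy_assoc : ∀ X : B,
    copy X ≫ (copy X ▷ X) ≫ (α_ X X X).hom = copy X ≫ (X ◁ copy X)
  copy_comm : ∀ X : B, copy X ≫ (β_ X X).hom = copy X
  copy_counit : ∀ X : B, copy X ≫ (discard X ▷ X) ≫ (λ_ X).hom = 𝟙 X
  -- cocopy and codiscard are right adjoint to copy and discard
  copy_cocopy_unit : ∀ X : B, 𝟙 X ≤ copy X ≫ cocopy X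
  cocopy_copy_counit : ∀ X : B, cocopy X ≫ copy X ≤ 𝟙 (X ⊗ X)
  discard_codiscard_unit : ∀ X : B, 𝟙 X ≤ discard X ≫ codiscard X
  codiscard_discard_counit : ∀ X : B, codiscard X ≫ discard X ≤ 𝟙 (𝟙_ B)
  -- the Frobenius law
  frobenius : ∀ X : B,
    cocopy X ≫ copy X = (X ◁ copy X) ≫ (α_ X X X).inv ≫ (cocopy X ▷ X)
  frobenius' : ∀ X : B,
    cocopy X ≫ copy X = (copy X ▷ X) ≫ (α_ X X X).hom ≫ (X ◁ cocopy X)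
  -- every morphism is a lax comonoid homomorphism
  lax_copy : ∀ {X Y : B} (R : X ⟶ Y), R ≫ copy Y ≤ copy X ≫ (R ⊗ₘ R)
  lax_discard : ∀ {X Y : B} (R : X ⟶ Y), R ≫ discard Y ≤ discard X
  -- coherence of the comonoids with the monoidal structure
  discard_unit : discard (𝟙_ B) = 𝟙 (𝟙_ B)
  copy_unit : copy (𝟙_ B) = (λ_ (𝟙_ B)).inv
  discard_tensor : ∀ X Y : B,
    discard (X ⊗ Y) = (discard X ⊗ₘ discard Y) ≫ (λ_ (𝟙_ B)).hom
  copy_tensor : ∀ X Y : B,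
    copy (X ⊗ Y) = (copy X ⊗ₘ copy Y) ≫ tensorμ X X Y Y

namespace CartesianBicat

variable {B : Type u} [Category.{v} B] [MonoidalCategory B] [SymmetricCategory B]
  [∀ X Y : B, PartialOrder (X ⟶ Y)] [CartesianBicat B]

/-- A map in a cartesian bicategory: a strict comonoid homomorphism. -/
def IsMap {X Y : B} (f : X ⟶ Y) : Prop :=
  f ≫ copy Y = copy X ≫ (f ⊗ₘ f) ∧ f ≫ discard Y = discard X

/-- The first projection of the tensor on maps. -/
def proj₁ (X Y : B) : X ⊗ Y ⟶ X := (X ◁ discard Y) ≫ (ρ_ X).hom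

/-- The second projection of the tensor on maps. -/
def proj₂ (X Y : B) : X ⊗ Y ⟶ Y := (discard X ▷ Y) ≫ (λ_ Y).hom

/-- The cup of the self-duality of an object. -/
def cup (X : B) : 𝟙_ B ⟶ X ⊗ X := codiscard X ≫ copy X

/-- The cap of the self-duality of an object. -/
def cap (X : B) : X ⊗ X ⟶ 𝟙_ B := cocopy X ≫ discard X

/-- The top element of a hom-poset. -/
def homTop (X Y : B) : X ⟶ Y := discard X ≫ codiscard Y

/-- The meet of two morphisms of a hom-poset. -/
def homMeet {X Y : B} (R S : X ⟶ Y) : X ⟶ Y :=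
  copy X ≫ (R ⊗ₘ S) ≫ cocopy Y

end CartesianBicat

open CartesianBicat

section Aux

variable {B : Type u} [Category.{v} B] [MonoidalCategory B] [SymmetricCategory B]
  [∀ X Y : B, PartialOrder (X ⟶ Y)] [CartesianBicat B]

/-- Right-unit form of the counit law, via cocommutativity. -/
lemma copy_counit_right (X : B) :
    copy X ≫ (X ◁ discard X) ≫ (ρ_ X).hom = 𝟙 X := by
  have h1 : (X ◁ discard X) ≫ (β_ X (𝟙_ B)).hom
      = (β_ X X).hom ≫ (discard X ▷ X) :=
    BraidedCategory.braiding_naturality_right X (discard X)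
  calc copy X ≫ (X ◁ discard X) ≫ (ρ_ X).hom
      = copy X ≫ (X ◁ discard X) ≫ (β_ X (𝟙_ B)).hom ≫ (λ_ X).hom := by
        rw [braiding_leftUnitor]
    _ = copy X ≫ (β_ X X).hom ≫ (discard X ▷ X) ≫ (λ_ X).hom := by
        rw [← Category.assoc (X ◁ discard X), h1, Category.assoc]
    _ = copy X ≫ (discard X ▷ X) ≫ (λ_ X).hom := by
        rw [← Category.assoc (copy X), copy_comm]
    _ = 𝟙 X := copy_counit X

lemma lax_cocopy_left (Y : B) :
    (λ_ Y).inv ≫ (codiscard Y ▷ Y) ≫ cocopy Y ≤ 𝟙 Y := by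
  calc (λ_ Y).inv ≫ (codiscard Y ▷ Y) ≫ cocopy Y
      = (λ_ Y).inv ≫ (codiscard Y ▷ Y) ≫ cocopy Y ≫
          (copy Y ≫ (discard Y ▷ Y) ≫ (λ_ Y).hom) := by
        rw [copy_counit, Category.comp_id]
    _ ≤ (λ_ Y).inv ≫ (codiscard Y ▷ Y) ≫ 𝟙 (Y ⊗ Y) ≫
          (discard Y ▷ Y) ≫ (λ_ Y).hom := by
        refine comp_le_comp le_rfl (comp_le_comp le_rfl ?_)
        rw [← Category.assoc]
        exact comp_le_comp (cocopy_copy_counit Y) le_rfl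
    _ = (λ_ Y).inv ≫ ((codiscard Y ≫ discard Y) ▷ Y) ≫ (λ_ Y).hom := by
        rw [Category.id_comp, ← Category.assoc ((codiscard Y ▷ Y)),
          ← MonoidalCategory.comp_whiskerRight]
    _ ≤ (λ_ Y).inv ≫ (𝟙 (𝟙_ B) ▷ Y) ≫ (λ_ Y).hom := by
        refine comp_le_comp le_rfl (comp_le_comp ?_ le_rfl)
        rw [← MonoidalCategory.tensorHom_id, ← MonoidalCategory.tensorHom_id]
        exact tensorHom_le_tensorHom (codiscard_discard_counit Y) le_rfl
    _ = 𝟙 Y := by simp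

lemma lax_cocopy_right (Y : B) :
    (ρ_ Y).inv ≫ (Y ◁ codiscard Y) ≫ cocopy Y ≤ 𝟙 Y := by
  calc (ρ_ Y).inv ≫ (Y ◁ codiscard Y) ≫ cocopy Y
      = (ρ_ Y).inv ≫ (Y ◁ codiscard Y) ≫ cocopy Y ≫
          (copy Y ≫ (Y ◁ discard Y) ≫ (ρ_ Y).hom) := by
        rw [copy_counit_right, Category.comp_id]
    _ ≤ (ρ_ Y).inv ≫ (Y ◁ codiscard Y) ≫ 𝟙 (Y ⊗ Y) ≫
          (Y ◁ discard Y) ≫ (ρ_ Y).hom := by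
        refine comp_le_comp le_rfl (comp_le_comp le_rfl ?_)
        rw [← Category.assoc]
        exact comp_le_comp (cocopy_copy_counit Y) le_rfl
    _ = (ρ_ Y).inv ≫ (Y ◁ (codiscard Y ≫ discard Y)) ≫ (ρ_ Y).hom := by
        rw [Category.id_comp, ← Category.assoc (Y ◁ codiscard Y),
          ← MonoidalCategory.whiskerLeft_comp]
    _ ≤ (ρ_ Y).inv ≫ (Y ◁ 𝟙 (𝟙_ B)) ≫ (ρ_ Y).hom := by
        refine comp_le_comp le_rfl (comp_le_comp ?_ le_rfl)
        rw [← MonoidalCategory.id_tensorHom, ← MonoidalCategory.id_tensorHom]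
        exact tensorHom_le_tensorHom le_rfl (codiscard_discard_counit Y)
    _ = 𝟙 Y := by simp

lemma le_homTop {X Y : B} (R : X ⟶ Y) : R ≤ homTop X Y := by
  calc R = R ≫ 𝟙 Y := (Category.comp_id R).symm
    _ ≤ R ≫ discard Y ≫ codiscard Y :=
        comp_le_comp le_rfl (discard_codiscard_unit Y)
    _ = (R ≫ discard Y) ≫ codiscard Y := by rw [Category.assoc]
    _ ≤ discard X ≫ codiscard Y := comp_le_comp (lax_discard R) le_rfl

end Aux

/-- In a cartesian bicategory, every hom-poset `Hom(X, Y)` is an inf-semilattice: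
`!_X ≫ ¡_Y` is its top element, and `Δ_X ≫ (R ⊗ₘ S) ≫ ∇_Y` is the greatest lower
bound of `R` and `S`. -/
theorem hom_poset_is_inf_semilattice {B : Type u} [Category.{v} B]
    [MonoidalCategory B] [SymmetricCategory B] [∀ X Y : B, PartialOrder (X ⟶ Y)]
    [CartesianBicat B] {X Y : B} (R S : X ⟶ Y) :
    R ≤ homTop X Y ∧
    homMeet R S ≤ R ∧ homMeet R S ≤ S ∧
    (∀ T : X ⟶ Y, T ≤ R → T ≤ S → T ≤ homMeet R S) := by
  refine ⟨le_homTop R, ?_, ?_, ?_⟩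
  · -- homMeet R S ≤ R
    calc homMeet R S = copy X ≫ (R ⊗ₘ S) ≫ cocopy Y := rfl
      _ ≤ copy X ≫ (R ⊗ₘ (discard X ≫ codiscard Y)) ≫ cocopy Y := by
          refine comp_le_comp le_rfl (comp_le_comp ?_ le_rfl)
          exact tensorHom_le_tensorHom le_rfl (le_homTop S)
      _ = copy X ≫ ((X ◁ discard X) ≫ (R ⊗ₘ codiscard Y)) ≫ cocopy Y := by
          rw [← MonoidalCategory.id_tensorHom, MonoidalCategory.tensorHom_comp_tensorHom,
            Category.id_comp]
      _ = (copy X ≫ (X ◁ discard X) ≫ (ρ_ X).hom) ≫ (ρ_ X).inv ≫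
            (R ⊗ₘ codiscard Y) ≫ cocopy Y := by
          simp only [Category.assoc, Iso.hom_inv_id_assoc]
      _ = (ρ_ X).inv ≫ (R ⊗ₘ codiscard Y) ≫ cocopy Y := by
          rw [copy_counit_right, Category.id_comp]
      _ = (ρ_ X).inv ≫ (R ▷ 𝟙_ B) ≫ (Y ◁ codiscard Y) ≫ cocopy Y := by
          rw [← Category.assoc (R ▷ 𝟙_ B), ← MonoidalCategory.tensorHom_def]
      _ = R ≫ (ρ_ Y).inv ≫ (Y ◁ codiscard Y) ≫ cocopy Y := by
          simp only [← rightUnitor_inv_naturality_assoc, Category.assoc]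
      _ ≤ R ≫ 𝟙 Y := comp_le_comp le_rfl (lax_cocopy_right Y)
      _ = R := Category.comp_id R
  · -- homMeet R S ≤ S
    calc homMeet R S = copy X ≫ (R ⊗ₘ S) ≫ cocopy Y := rfl
      _ ≤ copy X ≫ ((discard X ≫ codiscard Y) ⊗ₘ S) ≫ cocopy Y := by
          refine comp_le_comp le_rfl (comp_le_comp ?_ le_rfl)
          exact tensorHom_le_tensorHom (le_homTop R) le_rfl
      _ = copy X ≫ ((discard X ▷ X) ≫ (codiscard Y ⊗ₘ S)) ≫ cocopy Y := by
          rw [← MonoidalCategory.tensorHom_id, MonoidalCategory.tensorHom_comp_tensorHom,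
            Category.id_comp]
      _ = (copy X ≫ (discard X ▷ X) ≫ (λ_ X).hom) ≫ (λ_ X).inv ≫
            (codiscard Y ⊗ₘ S) ≫ cocopy Y := by
          simp only [Category.assoc, Iso.hom_inv_id_assoc]
      _ = (λ_ X).inv ≫ (codiscard Y ⊗ₘ S) ≫ cocopy Y := by
          rw [copy_counit, Category.id_comp]
      _ = (λ_ X).inv ≫ (𝟙_ B ◁ S) ≫ (codiscard Y ▷ Y) ≫ cocopy Y := by
          rw [← Category.assoc (𝟙_ B ◁ S), ← MonoidalCategory.tensorHom_def']
      _ = S ≫ (λ_ Y).inv ≫ (codiscard Y ▷ Y) ≫ cocopy Y := by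
          simp only [← leftUnitor_inv_naturality_assoc, Category.assoc]
      _ ≤ S ≫ 𝟙 Y := comp_le_comp le_rfl (lax_cocopy_left Y)
      _ = S := Category.comp_id S
  · intro T hR hS
    calc T = T ≫ 𝟙 Y := (Category.comp_id T).symm
      _ ≤ T ≫ copy Y ≫ cocopy Y := comp_le_comp le_rfl (copy_cocopy_unit Y)
      _ = (T ≫ copy Y) ≫ cocopy Y := by rw [Category.assoc]
      _ ≤ (copy X ≫ (T ⊗ₘ T)) ≫ cocopy Y := comp_le_comp (lax_copy T) le_rfl
      _ ≤ (copy X ≫ (R ⊗ₘ S)) ≫ cocopy Y := by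
          refine comp_le_comp (comp_le_comp le_rfl ?_) le_rfl
          exact tensorHom_le_tensorHom hR hS
      _ = homMeet R S := by rw [Category.assoc]; rfl
end

section
/- In a cartesian bicategory, a morphism f : X → Y is a comonoid homomorphism (i.e., f;Δ_Y = Δ_X;(f⊗f) and f;!_Y = !_X) if and only if f has a right adjoint in the poset-enriched sense, i.e., there exists R : Y → X with id_X ≤ f;R and R;f ≤ id_Y. -/
open CategoryTheory MonoidalCategory

universe v u

open CartesianBicat

section Aux

variable {B : Type u} [Category.{v} B] [MonoidalCategory B] [SymmetricCategory B]
  [∀ X Y : B, PartialOrder (X ⟶ Y)] [CartesianBicat B]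

lemma whiskerRight_le' {X Y : B} {f g : X ⟶ Y} (h : f ≤ g) (Z : B) :
    f ▷ Z ≤ g ▷ Z := by
  rw [← tensorHom_id, ← tensorHom_id]
  exact tensorHom_le_tensorHom h le_rfl

lemma whiskerLeft_le' (Z : B) {X Y : B} {f g : X ⟶ Y} (h : f ≤ g) :
    Z ◁ f ≤ Z ◁ g := by
  rw [← id_tensorHom, ← id_tensorHom]
  exact tensorHom_le_tensorHom le_rfl h

/-- The other counit law, derived from cocommutativity. -/
lemma copy_counit' (Z : B) :
    copy Z ≫ (Z ◁ discard Z) ≫ (ρ_ Z).hom = 𝟙 Z := by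
  conv_lhs => rw [← copy_comm Z]
  slice_lhs 2 3 => rw [← BraidedCategory.braiding_naturality_left (discard Z) Z]
  slice_lhs 3 4 => rw [braiding_rightUnitor]
  exact copy_counit Z

lemma snakeAux (Z : B) :
    (λ_ Z).inv ≫ (codiscard Z ▷ Z) ≫ cocopy Z = 𝟙 Z := by
  apply le_antisymm
  · calc (λ_ Z).inv ≫ (codiscard Z ▷ Z) ≫ cocopy Z
        = (λ_ Z).inv ≫ (codiscard Z ▷ Z) ≫ (cocopy Z ≫ copy Z) ≫
            (discard Z ▷ Z) ≫ (λ_ Z).hom := by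
          simp only [Category.assoc, copy_counit Z, Category.comp_id]
      _ ≤ (λ_ Z).inv ≫ (codiscard Z ▷ Z) ≫ 𝟙 (Z ⊗ Z) ≫
            (discard Z ▷ Z) ≫ (λ_ Z).hom :=
          comp_le_comp le_rfl (comp_le_comp le_rfl
            (comp_le_comp (cocopy_copy_counit Z) le_rfl))
      _ = (λ_ Z).inv ≫ ((codiscard Z ≫ discard Z) ▷ Z) ≫ (λ_ Z).hom := by
          simp [comp_whiskerRight]
      _ ≤ (λ_ Z).inv ≫ (𝟙 (𝟙_ B) ▷ Z) ≫ (λ_ Z).hom :=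
          comp_le_comp le_rfl (comp_le_comp
            (whiskerRight_le' (codiscard_discard_counit Z) Z) le_rfl)
      _ = 𝟙 Z := by simp
  · calc 𝟙 Z ≤ copy Z ≫ cocopy Z := copy_cocopy_unit Z
      _ = copy Z ≫ (𝟙 Z ▷ Z) ≫ cocopy Z := by simp
      _ ≤ copy Z ≫ ((discard Z ≫ codiscard Z) ▷ Z) ≫ cocopy Z :=
          comp_le_comp le_rfl (comp_le_comp
            (whiskerRight_le' (discard_codiscard_unit Z) Z) le_rfl)
      _ = (copy Z ≫ (discard Z ▷ Z) ≫ (λ_ Z).hom) ≫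
            (λ_ Z).inv ≫ (codiscard Z ▷ Z) ≫ cocopy Z := by
          simp [comp_whiskerRight]
      _ = (λ_ Z).inv ≫ (codiscard Z ▷ Z) ≫ cocopy Z := by
          rw [copy_counit Z, Category.id_comp]

/-- The snake equation of the self-duality. -/
lemma snake (Z : B) :
    (λ_ Z).inv ≫ (cup Z ▷ Z) ≫ (α_ Z Z Z).hom ≫ (Z ◁ cap Z) ≫ (ρ_ Z).hom
      = 𝟙 Z := by
  simp only [cup, cap, comp_whiskerRight, MonoidalCategory.whiskerLeft_comp,
    Category.assoc]
  slice_lhs 3 5 => rw [← frobenius' Z]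
  slice_lhs 4 6 => rw [copy_counit' Z]
  slice_lhs 1 3 => rw [snakeAux Z]
  simp

end Aux

/-- In a cartesian bicategory, a morphism `f : X ⟶ Y` is a comonoid homomorphism
(i.e. `f ≫ Δ_Y = Δ_X ≫ (f ⊗ₘ f)` and `f ≫ !_Y = !_X`) if and only if it has a
right adjoint in the poset-enriched sense: some `R : Y ⟶ X` with `𝟙 X ≤ f ≫ R`
and `R ≫ f ≤ 𝟙 Y`. -/
theorem isMap_iff_hasRightAdjoint {B : Type u} [Category.{v} B]
    [MonoidalCategory B] [SymmetricCategory B] [∀ X Y : B, PartialOrder (X ⟶ Y)]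
    [CartesianBicat B] {X Y : B} (f : X ⟶ Y) :
    IsMap f ↔ ∃ R : Y ⟶ X, 𝟙 X ≤ f ≫ R ∧ R ≫ f ≤ 𝟙 Y := by
  constructor
  · rintro ⟨hc, hd⟩
    refine ⟨(λ_ Y).inv ≫ (cup X ▷ Y) ≫ (α_ X X Y).hom ≫ (X ◁ (f ▷ Y)) ≫
      (X ◁ cap Y) ≫ (ρ_ X).hom, ?_, ?_⟩
    · -- unit : 𝟙 X ≤ f ≫ R
      have h1 : cocopy X ≫ f ≤ (f ⊗ₘ f) ≫ cocopy Y :=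
        calc cocopy X ≫ f = (cocopy X ≫ f) ≫ 𝟙 Y := (Category.comp_id _).symm
          _ ≤ (cocopy X ≫ f) ≫ (copy Y ≫ cocopy Y) :=
              comp_le_comp le_rfl (copy_cocopy_unit Y)
          _ = cocopy X ≫ (f ≫ copy Y) ≫ cocopy Y := by simp
          _ = cocopy X ≫ (copy X ≫ (f ⊗ₘ f)) ≫ cocopy Y := by rw [hc]
          _ = (cocopy X ≫ copy X) ≫ ((f ⊗ₘ f) ≫ cocopy Y) := by simp
          _ ≤ 𝟙 (X ⊗ X) ≫ ((f ⊗ₘ f) ≫ cocopy Y) :=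
              comp_le_comp (cocopy_copy_counit X) le_rfl
          _ = (f ⊗ₘ f) ≫ cocopy Y := Category.id_comp _
      have hcap : cap X ≤ (f ⊗ₘ f) ≫ cap Y :=
        calc cap X = (cocopy X ≫ f) ≫ discard Y := by
              rw [Category.assoc, hd]; rfl
          _ ≤ ((f ⊗ₘ f) ≫ cocopy Y) ≫ discard Y := comp_le_comp h1 le_rfl
          _ = (f ⊗ₘ f) ≫ cap Y := by simp [cap]
      have E1 : f ≫ ((λ_ Y).inv ≫ (cup X ▷ Y) ≫ (α_ X X Y).hom ≫
            (X ◁ (f ▷ Y)) ≫ (X ◁ cap Y) ≫ (ρ_ X).hom)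
          = (λ_ X).inv ≫ (cup X ▷ X) ≫ (α_ X X X).hom ≫
            (X ◁ ((f ⊗ₘ f) ≫ cap Y)) ≫ (ρ_ X).hom := by
        rw [MonoidalCategory.tensorHom_def]
        simp only [MonoidalCategory.whiskerLeft_comp, Category.assoc]
        rw [leftUnitor_inv_naturality_assoc, whisker_exchange_assoc,
          associator_naturality_right_assoc]
        simp only [← MonoidalCategory.whiskerLeft_comp_assoc,
          whisker_exchange_assoc]
      calc 𝟙 X = (λ_ X).inv ≫ (cup X ▷ X) ≫ (α_ X X X).hom ≫
            (X ◁ cap X) ≫ (ρ_ X).hom := (snake X).symm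
        _ ≤ (λ_ X).inv ≫ (cup X ▷ X) ≫ (α_ X X X).hom ≫
            (X ◁ ((f ⊗ₘ f) ≫ cap Y)) ≫ (ρ_ X).hom :=
            comp_le_comp le_rfl (comp_le_comp le_rfl (comp_le_comp le_rfl
              (comp_le_comp (whiskerLeft_le' X hcap) le_rfl)))
        _ = f ≫ _ := E1.symm
    · -- counit : R ≫ f ≤ 𝟙 Y
      have h1 : codiscard X ≫ f ≤ codiscard Y :=
        calc codiscard X ≫ f = (codiscard X ≫ f) ≫ 𝟙 Y := (Category.comp_id _).symm
          _ ≤ (codiscard X ≫ f) ≫ (discard Y ≫ codiscard Y) :=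
              comp_le_comp le_rfl (discard_codiscard_unit Y)
          _ = codiscard X ≫ (f ≫ discard Y) ≫ codiscard Y := by simp
          _ = (codiscard X ≫ discard X) ≫ codiscard Y := by rw [hd]; simp
          _ ≤ 𝟙 (𝟙_ B) ≫ codiscard Y :=
              comp_le_comp (codiscard_discard_counit X) le_rfl
          _ = codiscard Y := Category.id_comp _
      have hcup : cup X ≫ (f ⊗ₘ f) ≤ cup Y :=
        calc cup X ≫ (f ⊗ₘ f) = (codiscard X ≫ f) ≫ copy Y := by
              simp only [cup, Category.assoc, ← hc]
          _ ≤ codiscard Y ≫ copy Y := comp_le_comp h1 le_rfl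
          _ = cup Y := rfl
      have E2 : ((λ_ Y).inv ≫ (cup X ▷ Y) ≫ (α_ X X Y).hom ≫
            (X ◁ (f ▷ Y)) ≫ (X ◁ cap Y) ≫ (ρ_ X).hom) ≫ f
          = (λ_ Y).inv ≫ ((cup X ≫ (f ⊗ₘ f)) ▷ Y) ≫ (α_ Y Y Y).hom ≫
            (Y ◁ cap Y) ≫ (ρ_ Y).hom := by
        rw [MonoidalCategory.tensorHom_def]
        simp only [comp_whiskerRight, Category.assoc]
        rw [← rightUnitor_naturality, whisker_exchange_assoc,
          whisker_exchange_assoc, ← associator_naturality_left_assoc,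
          ← associator_naturality_middle_assoc]
      calc ((λ_ Y).inv ≫ (cup X ▷ Y) ≫ (α_ X X Y).hom ≫
            (X ◁ (f ▷ Y)) ≫ (X ◁ cap Y) ≫ (ρ_ X).hom) ≫ f
          = (λ_ Y).inv ≫ ((cup X ≫ (f ⊗ₘ f)) ▷ Y) ≫ (α_ Y Y Y).hom ≫
            (Y ◁ cap Y) ≫ (ρ_ Y).hom := E2
        _ ≤ (λ_ Y).inv ≫ (cup Y ▷ Y) ≫ (α_ Y Y Y).hom ≫
            (Y ◁ cap Y) ≫ (ρ_ Y).hom :=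
            comp_le_comp le_rfl (comp_le_comp (whiskerRight_le' hcup Y) le_rfl)
        _ = 𝟙 Y := snake Y
  · rintro ⟨R, h1, h2⟩
    constructor
    · apply le_antisymm (lax_copy f)
      calc copy X ≫ (f ⊗ₘ f) = 𝟙 X ≫ copy X ≫ (f ⊗ₘ f) := (Category.id_comp _).symm
        _ ≤ (f ≫ R) ≫ copy X ≫ (f ⊗ₘ f) := comp_le_comp h1 le_rfl
        _ = f ≫ (R ≫ copy X) ≫ (f ⊗ₘ f) := by simp
        _ ≤ f ≫ (copy Y ≫ (R ⊗ₘ R)) ≫ (f ⊗ₘ f) :=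
            comp_le_comp le_rfl (comp_le_comp (lax_copy R) le_rfl)
        _ = f ≫ copy Y ≫ ((R ≫ f) ⊗ₘ (R ≫ f)) := by
            simp [tensorHom_comp_tensorHom]
        _ ≤ f ≫ copy Y ≫ (𝟙 Y ⊗ₘ 𝟙 Y) :=
            comp_le_comp le_rfl (comp_le_comp le_rfl
              (tensorHom_le_tensorHom h2 h2))
        _ = f ≫ copy Y := by simp
    · apply le_antisymm (lax_discard f)
      calc discard X = 𝟙 X ≫ discard X := (Category.id_comp _).symm
        _ ≤ (f ≫ R) ≫ discard X := comp_le_comp h1 le_rfl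
        _ = f ≫ (R ≫ discard X) := by simp
        _ ≤ f ≫ discard Y := comp_le_comp le_rfl (lax_discard R)
end

section
/- In the bicategory of relations Bicat_P of an elementary existential doctrine P, the operation R ↦ R^op := P_{σ_{Y,X}}(R), induced by the symmetry of the cartesian product, is an involutive bijection Hom(X,Y) → Hom(Y,X) that is contravariant with respect to composition: (R;S)^op = S^op ; R^op and δ_X^op = δ_X. -/
open CategoryTheory CategoryTheory.Limits

universe v u w

/-- An elementary existential doctrine on a cartesian category `C`:
a contravariant functor into inf-semilattices with top, equipped with equality
predicates `δ`, and left adjoints to reindexing along both product projections,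
satisfying Beck–Chevalley, Frobenius reciprocity and the elementarity condition. -/
structure EED (C : Type u) [Category.{v} C] [HasFiniteProducts C] where
  obj : C → Type w
  semi : ∀ A : C, SemilatticeInf (obj A)
  otop : ∀ A : C, OrderTop (obj A)
  map : ∀ {A B : C}, (A ⟶ B) → obj B → obj A
  map_id : ∀ (A : C) (α : obj A), map (𝟙 A) α = α
  map_comp : ∀ {A B D : C} (f : A ⟶ B) (g : B ⟶ D) (α : obj D),
    map (f ≫ g) α = map f (map g α)
  map_inf : ∀ {A B : C} (f : A ⟶ B) (α β : obj B), map f (α ⊓ β) = map f α ⊓ map f β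
  map_top : ∀ {A B : C} (f : A ⟶ B), map f (⊤ : obj B) = (⊤ : obj A)
  /-- the equality predicate -/
  δ : ∀ A : C, obj (A ⨯ A)
  /-- existential quantification along the first projection (quantifying away the
  second factor) -/
  exFst : ∀ {X A : C}, obj (X ⨯ A) → obj X
  exFst_adj : ∀ {X A : C} (β : obj (X ⨯ A)) (α : obj X),
    exFst β ≤ α ↔ β ≤ map prod.fst α
  /-- existential quantification along the second projection -/
  exSnd : ∀ {X A : C}, obj (X ⨯ A) → obj A
  exSnd_adj : ∀ {X A : C} (β : obj (X ⨯ A)) (α : obj A),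
    exSnd β ≤ α ↔ β ≤ map prod.snd α
  bcFst : ∀ {X X' A : C} (f : X' ⟶ X) (β : obj (X ⨯ A)),
    exFst (map (prod.map f (𝟙 A)) β) = map f (exFst β)
  bcSnd : ∀ {X A A' : C} (f : A' ⟶ A) (β : obj (X ⨯ A)),
    exSnd (map (prod.map (𝟙 X) f) β) = map f (exSnd β)
  frobFst : ∀ {X A : C} (α : obj X) (β : obj (X ⨯ A)),
    exFst (map prod.fst α ⊓ β) = α ⊓ exFst β
  frobSnd : ∀ {X A : C} (α : obj A) (β : obj (X ⨯ A)),
    exSnd (map prod.snd α ⊓ β) = α ⊓ exSnd β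
  /-- elementarity: `α ↦ P_{⟨π₁,π₂⟩}(α) ⊓ P_{⟨π₂,π₃⟩}(δ_A)` is left adjoint to
  reindexing along `id_X × Δ_A`. -/
  elem : ∀ {X A : C} (α : obj (X ⨯ A)) (γ : obj (X ⨯ (A ⨯ A))),
    (map (prod.map (𝟙 X) prod.fst) α ⊓ map prod.snd (δ A) ≤ γ) ↔
      α ≤ map (prod.map (𝟙 X) (diag A)) γ

attribute [instance] EED.semi EED.otop

variable {C : Type u} [Category.{v} C] [HasFiniteProducts C]

namespace EED

/-- Composition in the bicategory of relations `Bicat_P`: realised using the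
ambient object `(X ⨯ Z) ⨯ Y` and existential quantification of the middle factor. -/
noncomputable def rcomp (P : EED C) {X Y Z : C} (R : P.obj (X ⨯ Y)) (S : P.obj (Y ⨯ Z)) :
    P.obj (X ⨯ Z) :=
  P.exFst (P.map (prod.lift (prod.fst ≫ prod.fst) prod.snd) R ⊓
    P.map (prod.lift prod.snd (prod.fst ≫ prod.snd)) S)

/-- The graph of a morphism of the base category. -/
noncomputable def graph (P : EED C) {X Y : C} (f : X ⟶ Y) : P.obj (X ⨯ Y) :=
  P.map (prod.map f (𝟙 Y)) (P.δ Y)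

/-- Tensor product of relations in `Bicat_P`. -/
noncomputable def rtensor (P : EED C) {X Y X' Y' : C} (R : P.obj (X ⨯ Y)) (S : P.obj (X' ⨯ Y')) :
    P.obj ((X ⨯ X') ⨯ (Y ⨯ Y')) :=
  P.map (prod.map prod.fst prod.fst) R ⊓ P.map (prod.map prod.snd prod.snd) S

end EED


namespace EED

variable (P : EED C)

theorem map_mono {A B : C} (f : A ⟶ B) {α β : P.obj B} (h : α ≤ β) :
    P.map f α ≤ P.map f β := by
  have h' : α ⊓ β = α := inf_eq_left.mpr h
  have := P.map_inf f α β
  rw [h'] at this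
  exact inf_eq_left.mp this.symm

theorem map_swap_swap {A B : C} (α : P.obj (A ⨯ B)) :
    P.map (prod.lift prod.snd prod.fst : A ⨯ B ⟶ B ⨯ A)
      (P.map (prod.lift prod.snd prod.fst : B ⨯ A ⟶ A ⨯ B) α) = α := by
  rw [← P.map_comp]
  have : (prod.lift prod.snd prod.fst ≫ prod.lift prod.snd prod.fst :
      A ⨯ B ⟶ A ⨯ B) = 𝟙 _ := by ext <;> simp [prod.lift_fst, prod.lift_snd]
  rw [this, P.map_id]

theorem delta_refl (A : C) : P.map (diag A) (P.δ A) = ⊤ := by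
  have h : (⊤ : P.obj (A ⨯ A)) ≤
      P.map (prod.map (𝟙 A) (diag A)) (P.map (prod.snd : A ⨯ (A ⨯ A) ⟶ A ⨯ A) (P.δ A)) := by
    rw [← P.elem]
    rw [P.map_top]
    exact inf_le_right
  have h2 := P.map_mono (diag A) h
  rw [P.map_top, ← P.map_comp, ← P.map_comp] at h2
  have e : ((diag A ≫ prod.map (𝟙 A) (diag A)) ≫ (prod.snd : A ⨯ (A ⨯ A) ⟶ A ⨯ A))
      = diag A := by simp [prod.lift_fst, prod.lift_snd]
  rw [e] at h2
  exact top_le_iff.mp h2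

theorem delta_le {A : C} (θ : P.obj (A ⨯ A)) (h : P.map (diag A) θ = ⊤) :
    P.δ A ≤ θ := by
  have key : P.map (prod.map (𝟙 A) (prod.fst : A ⨯ A ⟶ A)) (⊤ : P.obj (A ⨯ A)) ⊓
      P.map (prod.snd : A ⨯ (A ⨯ A) ⟶ A ⨯ A) (P.δ A) ≤
      P.map (prod.snd : A ⨯ (A ⨯ A) ⟶ A ⨯ A) θ := by
    rw [P.elem, ← P.map_comp]
    have e : (prod.map (𝟙 A) (diag A) ≫ (prod.snd : A ⨯ (A ⨯ A) ⟶ A ⨯ A))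
        = prod.snd ≫ diag A := by simp
    rw [e, P.map_comp, h, P.map_top]
  rw [P.map_top] at key
  have key2 : P.map (prod.snd : A ⨯ (A ⨯ A) ⟶ A ⨯ A) (P.δ A) ≤
      P.map (prod.snd : A ⨯ (A ⨯ A) ⟶ A ⨯ A) θ := by simpa using key
  have h3 := P.map_mono (prod.lift prod.fst (𝟙 (A ⨯ A)) : A ⨯ A ⟶ A ⨯ (A ⨯ A)) key2
  rw [← P.map_comp, ← P.map_comp] at h3
  simpa [P.map_id, prod.lift_fst, prod.lift_snd] using h3

theorem delta_symm (A : C) :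
    P.map (prod.lift prod.snd prod.fst : A ⨯ A ⟶ A ⨯ A) (P.δ A) = P.δ A := by
  have half : ∀ α : P.obj (A ⨯ A),
      P.δ A ≤ P.map (prod.lift prod.snd prod.fst : A ⨯ A ⟶ A ⨯ A) (P.δ A) := by
    intro _
    apply P.delta_le
    rw [← P.map_comp]
    have e : (diag A ≫ (prod.lift prod.snd prod.fst : A ⨯ A ⟶ A ⨯ A)) = diag A := by
      ext <;> simp [prod.lift_fst, prod.lift_snd]
    rw [e, P.delta_refl]
  have h1 := half (P.δ A)
  have h2 := P.map_mono (prod.lift prod.snd prod.fst : A ⨯ A ⟶ A ⨯ A) h1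
  rw [P.map_swap_swap] at h2
  exact le_antisymm h2 h1

end EED

/-- The opposite relation `R^op = P_{σ}(R)`, induced by the symmetry of the
cartesian product of the base, is involutive and contravariant with respect to
composition in `Bicat_P`, and fixes identities. -/
theorem op_involutive_contravariant (P : EED C) {X Y Z : C}
    (R : P.obj (X ⨯ Y)) (S : P.obj (Y ⨯ Z)) :
    P.map (prod.lift prod.snd prod.fst : X ⨯ Y ⟶ Y ⨯ X)
        (P.map (prod.lift prod.snd prod.fst : Y ⨯ X ⟶ X ⨯ Y) R) = R ∧
    P.map (prod.lift prod.snd prod.fst : Z ⨯ X ⟶ X ⨯ Z) (P.rcomp R S) =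
      P.rcomp (P.map (prod.lift prod.snd prod.fst : Z ⨯ Y ⟶ Y ⨯ Z) S)
        (P.map (prod.lift prod.snd prod.fst : Y ⨯ X ⟶ X ⨯ Y) R) ∧
    P.map (prod.lift prod.snd prod.fst : X ⨯ X ⟶ X ⨯ X) (P.δ X) = P.δ X := by
  refine ⟨P.map_swap_swap R, ?_, P.delta_symm X⟩
  unfold EED.rcomp
  rw [← P.bcFst, P.map_inf, ← P.map_comp, ← P.map_comp, ← P.map_comp, ← P.map_comp]
  have e1 : (prod.map (prod.lift prod.snd prod.fst : Z ⨯ X ⟶ X ⨯ Z) (𝟙 Y) ≫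
      prod.lift (prod.fst ≫ prod.fst) prod.snd : (Z ⨯ X) ⨯ Y ⟶ X ⨯ Y) =
      (prod.lift prod.snd (prod.fst ≫ prod.snd) ≫ prod.lift prod.snd prod.fst :
        (Z ⨯ X) ⨯ Y ⟶ X ⨯ Y) := by ext <;> simp [prod.lift_fst, prod.lift_snd]
  have e2 : (prod.map (prod.lift prod.snd prod.fst : Z ⨯ X ⟶ X ⨯ Z) (𝟙 Y) ≫
      prod.lift prod.snd (prod.fst ≫ prod.snd) : (Z ⨯ X) ⨯ Y ⟶ Y ⨯ Z) =
      (prod.lift (prod.fst ≫ prod.fst) prod.snd ≫ prod.lift prod.snd prod.fst :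
        (Z ⨯ X) ⨯ Y ⟶ Y ⨯ Z) := by ext <;> simp [prod.lift_fst, prod.lift_snd]
  rw [e1, e2, inf_comm]
end
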